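/- For indeterminates a_1, ..., a_m and integers 1 ≤ k ≤ j ≤ m, the sum over all k-element subsets V of {1,...,m} of the complete homogeneous symmetric polynomial h_{j-k+1} evaluated at the variables indexed by V equals the sum over partitions λ of j-k+1 of binomial(m - ℓ(λ), k - ℓ(λ)) times the monomial symmetric polynomial m_λ(a_1, ..., a_m), where ℓ(λ) is the number of parts of λ. -/

import Mathlib

/-- The complete homogeneous symmetric polynomial `h_r` evaluated at the family `a`. -/
def hsym {R : Type*} [CommSemiring R] {ι : Type*} [Fintype ι] [DecidableEq ι]
    (r : ℕ) (a : ι → R) : R :=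
  ∑ s : Sym ι r, (s.val.map a).prod

/-- The monomial symmetric polynomial `m_λ` (for `λ` a partition of `r`)
evaluated at `a_1, …, a_m`: the sum of all distinct monomials in the `a_i`
whose multiset of (nonzero) exponents equals the multiset of parts of `λ`. -/
def msym {R : Type*} [CommSemiring R] {m r : ℕ} (lam : Nat.Partition r)
    (a : Fin m → R) : R :=
  ∑ f ∈ (Finset.univ : Finset (Fin m → Fin (r + 1))).filter
      (fun f => Multiset.filter (fun x => x ≠ 0)
          (Multiset.map (fun i => ((f i : ℕ))) Finset.univ.val) = lam.parts),
    ∏ i, a i ^ ((f i : ℕ))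

private lemma count_sum_replicate {ι : Type*} [Fintype ι] [DecidableEq ι] (c : ι → ℕ) (j : ι) :
    Multiset.count j (∑ i, Multiset.replicate (c i) i) = c j := by
  rw [Multiset.count_sum', Finset.sum_eq_single j]
  · simp [Multiset.count_replicate]
  · intro b _ hb; rw [Multiset.count_replicate, if_neg hb]
  · simp

private lemma card_sum_replicate {ι : Type*} [Fintype ι] [DecidableEq ι] (c : ι → ℕ) :
    Multiset.card (∑ i, Multiset.replicate (c i) i) = ∑ i, c i := by
  induction (Finset.univ : Finset ι) using Finset.induction with
  | empty => simp
  | insert _ _ h ih => simp [Finset.sum_insert h, ih]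

private lemma hsym_eq_sum_fun {R : Type*} [CommSemiring R] {ι : Type*} [Fintype ι] [DecidableEq ι]
    (r : ℕ) (a : ι → R) :
    hsym r a = ∑ f ∈ (Finset.univ : Finset (ι → Fin (r+1))).filter
        (fun f => ∑ i, ((f i : ℕ)) = r),
      ∏ i, a i ^ ((f i : ℕ)) := by
  rw [hsym]
  refine Finset.sum_bij'
    (fun s _ => fun i => (⟨Multiset.count i s.1, by
      have h1 := Multiset.count_le_card i s.1
      have h2 := s.2
      omega⟩ : Fin (r+1)))
    (fun f hf => ⟨∑ i, Multiset.replicate ((f i : ℕ)) i, by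
      simp only [Finset.mem_filter] at hf
      rw [card_sum_replicate]
      exact hf.2⟩)
    (fun s _ => by
      simp only [Finset.mem_filter, Finset.mem_univ, true_and]
      have h1 : ∑ i, Multiset.count i s.1 = Multiset.card s.1 :=
        Multiset.sum_count_eq_card (fun a _ => Finset.mem_univ a)
      simpa [h1] using s.2)
    (fun f hf => Finset.mem_univ _)
    (fun s _ => by
      apply Subtype.ext
      apply Multiset.ext.mpr
      intro b
      simp [count_sum_replicate])
    (fun f hf => by
      funext i
      apply Fin.ext
      simp [count_sum_replicate])
    (fun s _ => by
      rw [Finset.prod_multiset_map_count]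
      refine Finset.prod_subset (Finset.subset_univ _) ?_
      intro x _ hx
      rw [Multiset.mem_toFinset] at hx
      rw [Multiset.count_eq_zero_of_notMem hx, pow_zero])

private lemma restrict_prod {M : Type*} [CommMonoid M] {m r : ℕ} (V : Finset (Fin m))
    (g : {x // x ∈ V} → Fin (r+1)) (b : Fin m → ℕ → M) (hb : ∀ i, b i 0 = 1) :
    ∏ i, b i ((if h : i ∈ V then g ⟨i, h⟩ else 0 : Fin (r+1)) : ℕ)
      = ∏ i : {x // x ∈ V}, b i.1 ((g i : ℕ)) := by
  have h1 : ∏ i, b i ((if h : i ∈ V then g ⟨i, h⟩ else 0 : Fin (r+1)) : ℕ)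
      = ∏ i ∈ V, b i ((if h : i ∈ V then g ⟨i, h⟩ else 0 : Fin (r+1)) : ℕ) :=
    (Finset.prod_subset (Finset.subset_univ V) (fun x _ hx => by
      rw [dif_neg hx]; simpa using hb x)).symm
  rw [h1, ← Finset.prod_attach V
      (fun i => b i ((if h : i ∈ V then g ⟨i, h⟩ else 0 : Fin (r+1)) : ℕ)),
    Finset.univ_eq_attach]
  exact Finset.prod_congr rfl (fun x _ => by simp [dif_pos x.2])

private lemma restrict_sum {m r : ℕ} (V : Finset (Fin m))
    (g : {x // x ∈ V} → Fin (r+1)) :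
    ∑ i, ((if h : i ∈ V then g ⟨i, h⟩ else 0 : Fin (r+1)) : ℕ)
      = ∑ i : {x // x ∈ V}, ((g i : ℕ)) := by
  have h1 : ∑ i, ((if h : i ∈ V then g ⟨i, h⟩ else 0 : Fin (r+1)) : ℕ)
      = ∑ i ∈ V, ((if h : i ∈ V then g ⟨i, h⟩ else 0 : Fin (r+1)) : ℕ) :=
    (Finset.sum_subset (Finset.subset_univ V) (fun x _ hx => by rw [dif_neg hx]; rfl)).symm
  rw [h1, ← Finset.sum_attach V
      (fun i => ((if h : i ∈ V then g ⟨i, h⟩ else 0 : Fin (r+1)) : ℕ)),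
    Finset.univ_eq_attach]
  exact Finset.sum_congr rfl (fun x _ => by simp [dif_pos x.2])

private lemma hsym_restrict {R : Type*} [CommSemiring R] {m : ℕ} (r : ℕ) (a : Fin m → R)
    (V : Finset (Fin m)) :
    hsym r (fun i : {x // x ∈ V} => a i)
      = ∑ f ∈ (Finset.univ : Finset (Fin m → Fin (r+1))).filter
          (fun f => (∑ i, ((f i : ℕ)) = r) ∧ ∀ i, (f i : ℕ) ≠ 0 → i ∈ V),
        ∏ i, a i ^ ((f i : ℕ)) := by
  rw [hsym_eq_sum_fun]
  refine Finset.sum_bij'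
    (fun g _ => fun i => if h : i ∈ V then g ⟨i, h⟩ else 0)
    (fun f _ => fun x => f x.1)
    (fun g hg => by
      simp only [Finset.mem_filter, Finset.mem_univ, true_and] at hg ⊢
      constructor
      · rw [restrict_sum V g]; exact hg
      · intro i hi
        by_contra h
        simp [dif_neg h] at hi)
    (fun f hf => by
      simp only [Finset.mem_filter, Finset.mem_univ, true_and] at hf ⊢
      have h1 : ∑ x : {x // x ∈ V}, ((f x.1 : ℕ)) = ∑ i ∈ V, ((f i : ℕ)) := by
        rw [Finset.univ_eq_attach]
        exact Finset.sum_attach V (fun i => ((f i : ℕ)))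
      rw [h1, Finset.sum_subset (Finset.subset_univ V)
        (fun x _ hx => by by_contra h; exact hx (hf.2 x h))]
      exact hf.1)
    (fun g _ => by funext x; simp [dif_pos x.2])
    (fun f hf => by
      simp only [Finset.mem_filter, Finset.mem_univ, true_and] at hf
      funext i
      by_cases h : i ∈ V
      · simp [dif_pos h]
      · simp only [dif_neg h]
        by_contra hne
        exact h (hf.2 i (fun h0 => hne (Fin.ext h0).symm)))
    (fun g _ => (restrict_prod V g (fun i n => a i ^ n) (fun _ => pow_zero _)).symm)

private lemma card_supersets {m k : ℕ} (T : Finset (Fin m)) (hT : T.card ≤ k) :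
    ((Finset.powersetCard k (Finset.univ : Finset (Fin m))).filter (fun V => T ⊆ V)).card
      = (m - T.card).choose (k - T.card) := by
  have hcard : (Finset.univ \ T : Finset (Fin m)).card = m - T.card := by
    rw [Finset.card_sdiff_of_subset (Finset.subset_univ T), Finset.card_univ, Fintype.card_fin]
  have key : ((Finset.powersetCard k (Finset.univ : Finset (Fin m))).filter
        (fun V => T ⊆ V)).card
      = (Finset.powersetCard (k - T.card) (Finset.univ \ T)).card := by
    refine Finset.card_bij' (fun V _ => V \ T) (fun W _ => W ∪ T) ?_ ?_ ?_ ?_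
    · intro V hV
      simp only [Finset.mem_filter, Finset.mem_powersetCard] at hV
      rw [Finset.mem_powersetCard]
      exact ⟨Finset.sdiff_subset_sdiff hV.1.1 (le_refl T),
        by rw [Finset.card_sdiff_of_subset hV.2, hV.1.2]⟩
    · intro W hW
      rw [Finset.mem_powersetCard] at hW
      have hdisj : Disjoint W T := Finset.disjoint_of_subset_left hW.1 Finset.sdiff_disjoint
      simp only [Finset.mem_filter, Finset.mem_powersetCard]
      refine ⟨⟨Finset.subset_univ _, ?_⟩, Finset.subset_union_right⟩
      rw [Finset.card_union_of_disjoint hdisj, hW.2]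
      omega
    · intro V hV
      simp only [Finset.mem_filter] at hV
      exact Finset.sdiff_union_of_subset hV.2
    · intro W hW
      rw [Finset.mem_powersetCard] at hW
      exact Finset.union_sdiff_cancel_right
        (Finset.disjoint_of_subset_left hW.1 Finset.sdiff_disjoint)
  rw [key, Finset.card_powersetCard, hcard]

private lemma card_supersets_zero {m k : ℕ} (T : Finset (Fin m)) (hT : k < T.card) :
    ((Finset.powersetCard k (Finset.univ : Finset (Fin m))).filter (fun V => T ⊆ V)).card
      = 0 := by
  rw [Finset.card_eq_zero, Finset.filter_eq_empty_iff]
  intro V hV hTV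
  have h1 := Finset.card_le_card hTV
  rw [(Finset.mem_powersetCard.mp hV).2] at h1
  omega

private lemma sum_filter_ne_zero_eq {m r : ℕ} (f : Fin m → Fin (r+1)) :
    (Multiset.filter (fun x => x ≠ 0)
        (Multiset.map (fun i => ((f i : ℕ))) Finset.univ.val)).sum = ∑ i, ((f i : ℕ)) := by
  have h2 : (Multiset.filter (fun x => ¬ x ≠ 0)
      (Multiset.map (fun i => ((f i : ℕ))) Finset.univ.val)).sum = 0 :=
    Multiset.sum_eq_zero (fun x hx => by
      have := Multiset.of_mem_filter hx
      simpa using this)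
  conv_rhs => rw [Finset.sum_eq_multiset_sum]
  conv_rhs => rw [← Multiset.filter_add_not (fun x => x ≠ 0)
    (Multiset.map (fun i => ((f i : ℕ))) Finset.univ.val)]
  rw [Multiset.sum_add, h2, add_zero]

/-- The partition attached to an exponent vector. -/
private def Pfun {m : ℕ} (r : ℕ) (f : Fin m → Fin (r+1)) : Nat.Partition r :=
  if h : (Multiset.filter (fun x => x ≠ 0)
      (Multiset.map (fun i => ((f i : ℕ))) Finset.univ.val)).sum = r then
    { parts := Multiset.filter (fun x => x ≠ 0)
        (Multiset.map (fun i => ((f i : ℕ))) Finset.univ.val)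
      parts_pos := by
        intro i hi
        have := Multiset.of_mem_filter hi
        exact Nat.pos_of_ne_zero this
      parts_sum := h }
  else
    { parts := Multiset.replicate r 1
      parts_pos := by
        intro i hi
        rw [Multiset.eq_of_mem_replicate hi]
        norm_num
      parts_sum := by simp [Multiset.sum_replicate] }

private lemma Pfun_parts {m r : ℕ} (f : Fin m → Fin (r+1)) (h : ∑ i, ((f i : ℕ)) = r) :
    (Pfun r f).parts = Multiset.filter (fun x => x ≠ 0)
      (Multiset.map (fun i => ((f i : ℕ))) Finset.univ.val) := by
  rw [Pfun, dif_pos (by rw [sum_filter_ne_zero_eq f]; exact h)]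

private lemma Pfun_card {m r : ℕ} (f : Fin m → Fin (r+1)) (h : ∑ i, ((f i : ℕ)) = r) :
    (Pfun r f).parts.card = (Finset.univ.filter (fun i => (f i : ℕ) ≠ 0)).card := by
  rw [Pfun_parts f h, Multiset.filter_map, Multiset.card_map]
  rfl

theorem stmt_10 {R : Type*} [CommRing R] (m k j : ℕ)
    (hk : 1 ≤ k) (hkj : k ≤ j) (hjm : j ≤ m) (a : Fin m → R) :
    ∑ V ∈ Finset.powersetCard k (Finset.univ : Finset (Fin m)),
        hsym (j - k + 1) (fun i : {x // x ∈ V} => a i)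
      = ∑ lam : Nat.Partition (j - k + 1),
          (if lam.parts.card ≤ k
            then (((m - lam.parts.card).choose (k - lam.parts.card) : ℕ) : R)
            else 0) * msym lam a := by
  set r := j - k + 1 with hr
  set F : Finset (Fin m → Fin (r+1)) :=
    (Finset.univ : Finset (Fin m → Fin (r+1))).filter (fun f => ∑ i, ((f i : ℕ)) = r) with hF
  set T : (Fin m → Fin (r+1)) → Finset (Fin m) :=
    fun f => Finset.univ.filter (fun i => (f i : ℕ) ≠ 0) with hT
  have hiff : ∀ (V : Finset (Fin m)) (f : Fin m → Fin (r+1)),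
      ((∀ i, (f i : ℕ) ≠ 0 → i ∈ V) ↔ T f ⊆ V) := by
    intro V f
    constructor
    · intro h x hx
      rw [hT] at hx
      simp only [Finset.mem_filter] at hx
      exact h x hx.2
    · intro h i hi
      exact h (by rw [hT]; simp only [Finset.mem_filter]; exact ⟨Finset.mem_univ i, hi⟩)
  calc ∑ V ∈ Finset.powersetCard k (Finset.univ : Finset (Fin m)),
        hsym r (fun i : {x // x ∈ V} => a i)
      = ∑ V ∈ Finset.powersetCard k (Finset.univ : Finset (Fin m)),
          ∑ f ∈ F.filter (fun f => ∀ i, (f i : ℕ) ≠ 0 → i ∈ V),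
            ∏ i, a i ^ ((f i : ℕ)) := by
        refine Finset.sum_congr rfl (fun V _ => ?_)
        rw [hsym_restrict r a V, hF, Finset.filter_filter]
    _ = ∑ f ∈ F, (((Finset.powersetCard k (Finset.univ : Finset (Fin m))).filter
          (fun V => T f ⊆ V)).card : R) * ∏ i, a i ^ ((f i : ℕ)) := by
        simp_rw [Finset.sum_filter]
        rw [Finset.sum_comm]
        refine Finset.sum_congr rfl (fun f _ => ?_)
        have hfilter : ((Finset.powersetCard k (Finset.univ : Finset (Fin m))).filter
              (fun V => ∀ i, (f i : ℕ) ≠ 0 → i ∈ V))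
            = (Finset.powersetCard k (Finset.univ : Finset (Fin m))).filter
              (fun V => T f ⊆ V) :=
          Finset.filter_congr (fun V _ => hiff V f)
        rw [← Finset.sum_filter, hfilter, Finset.sum_const, nsmul_eq_mul]
    _ = ∑ f ∈ F, (if (T f).card ≤ k
          then (((m - (T f).card).choose (k - (T f).card) : ℕ) : R) else 0)
          * ∏ i, a i ^ ((f i : ℕ)) := by
        refine Finset.sum_congr rfl (fun f _ => ?_)
        by_cases h : (T f).card ≤ k
        · rw [if_pos h, card_supersets (T f) h]
        · rw [if_neg h, card_supersets_zero (T f) (by omega)]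
          norm_num
    _ = ∑ lam : Nat.Partition r,
          (if lam.parts.card ≤ k
            then (((m - lam.parts.card).choose (k - lam.parts.card) : ℕ) : R)
            else 0) * msym lam a := by
        rw [← Finset.sum_fiberwise_of_maps_to (g := Pfun r)
          (fun f _ => Finset.mem_univ (Pfun r f))
          (fun f => (if (T f).card ≤ k
            then (((m - (T f).card).choose (k - (T f).card) : ℕ) : R) else 0)
            * ∏ i, a i ^ ((f i : ℕ)))]
        refine Finset.sum_congr rfl (fun lam _ => ?_)
        rw [msym, Finset.mul_sum]
        have hset : F.filter (fun f => Pfun r f = lam)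
            = (Finset.univ : Finset (Fin m → Fin (r + 1))).filter
              (fun f => Multiset.filter (fun x => x ≠ 0)
                (Multiset.map (fun i => ((f i : ℕ))) Finset.univ.val) = lam.parts) := by
          ext f
          simp only [Finset.mem_filter, Finset.mem_univ, true_and, hF]
          constructor
          · rintro ⟨h1, h2⟩
            rw [← Pfun_parts f h1, h2]
          · intro h
            have h1 : ∑ i, ((f i : ℕ)) = r := by
              rw [← sum_filter_ne_zero_eq f, h]; exact lam.parts_sum
            refine ⟨h1, ?_⟩
            apply Nat.Partition.ext
            rw [Pfun_parts f h1, h]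
        rw [hset]
        refine Finset.sum_congr rfl (fun f hf => ?_)
        rw [← hset, Finset.mem_filter] at hf
        have h1 : ∑ i, ((f i : ℕ)) = r := by
          have := hf.1; rw [hF, Finset.mem_filter] at this; exact this.2
        rw [← hf.2, Pfun_card f h1]
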